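/- Let t_0 < t_1 < ... < t_N be distinct real numbers, N ≥ 1, and let D be the N×N submatrix of the Lagrange differentiation matrix on t_0,...,t_N obtained by deleting the row and column indexed by t_0. Then D is invertible. -/

import Mathlib

open Finset Matrix

/-- The Lagrange differentiation matrix on nodes `t`. -/
noncomputable def lagrangeD {ι : Type*} [Fintype ι] [DecidableEq ι] (t : ι → ℝ) :
    Matrix ι ι ℝ :=
  Matrix.of fun j k =>
    if j = k then ∑ l ∈ Finset.univ.erase j, (t j - t l)⁻¹
    else (∏ l ∈ Finset.univ.erase j, (t j - t l)) /
      ((t j - t k) * ∏ l ∈ Finset.univ.erase k, (t k - t l))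

lemma derivative_finset_prod' {ι : Type*} [DecidableEq ι] (s : Finset ι)
    (f : ι → Polynomial ℝ) :
    Polynomial.derivative (∏ i ∈ s, f i)
      = ∑ i ∈ s, (∏ j ∈ s.erase i, f j) * Polynomial.derivative (f i) := by
  rw [Finset.prod_eq_multiset_prod, Polynomial.derivative_prod, Finset.sum_eq_multiset_sum]
  congr 1

open Polynomial in
lemma lagrangeD_eq_derivative_basis_eval {ι : Type*} [Fintype ι] [DecidableEq ι]
    (t : ι → ℝ) (hinj : Function.Injective t) (j k : ι) :
    (Polynomial.derivative (Lagrange.basis Finset.univ t k)).eval (t j) = lagrangeD t j k := by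
  classical
  have hdiv : ∀ x y : ℝ,
      Polynomial.derivative (Lagrange.basisDivisor x y) = Polynomial.C (x - y)⁻¹ := by
    intro x y
    simp [Lagrange.basisDivisor]
  rw [Lagrange.basis, derivative_finset_prod']
  simp only [eval_finset_sum, eval_mul, eval_prod, hdiv, eval_C]
  by_cases hjk : j = k
  · subst hjk
    rw [lagrangeD]
    simp only [Matrix.of_apply, if_pos rfl]
    refine Finset.sum_congr rfl fun i hi => ?_
    rw [Finset.prod_congr rfl (fun l hl => ?_), Finset.prod_const_one, one_mul]
    refine Lagrange.eval_basisDivisor_left_of_ne fun h => ?_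
    exact (Finset.mem_erase.mp (Finset.mem_of_mem_erase hl)).1 (hinj h).symm
  · rw [lagrangeD]
    simp only [Matrix.of_apply, if_neg hjk]
    rw [Finset.sum_eq_single j]
    · have hjmem : j ∈ Finset.univ.erase k := Finset.mem_erase.mpr ⟨hjk, Finset.mem_univ j⟩
      have hkmem : k ∈ Finset.univ.erase j := Finset.mem_erase.mpr ⟨Ne.symm hjk, Finset.mem_univ k⟩
      have hstep : ∀ l ∈ (Finset.univ.erase k).erase j,
          (Lagrange.basisDivisor (t k) (t l)).eval (t j) = (t k - t l)⁻¹ * (t j - t l) := by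
        intro l hl
        simp [Lagrange.basisDivisor]
      rw [Finset.prod_congr rfl hstep]
      have hne : ∀ l ∈ (Finset.univ.erase k).erase j, t k - t l ≠ 0 := by
        intro l hl
        have := (Finset.mem_erase.mp (Finset.mem_of_mem_erase hl)).1
        exact sub_ne_zero.mpr fun h => this (hinj h).symm
      have hB : (∏ l ∈ (Finset.univ.erase k).erase j, (t k - t l)) ≠ 0 :=
        Finset.prod_ne_zero_iff.mpr hne
      have h1 : t k - t j ≠ 0 := sub_ne_zero.mpr fun h => hjk (hinj h).symm
      have h2 : t j - t k ≠ 0 := sub_ne_zero.mpr fun h => hjk (hinj h)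
      have hAj : (∏ l ∈ Finset.univ.erase j, (t j - t l))
          = (t j - t k) * ∏ l ∈ (Finset.univ.erase k).erase j, (t j - t l) := by
        rw [← Finset.mul_prod_erase _ _ hkmem, Finset.erase_right_comm]
      have hAk : (∏ l ∈ Finset.univ.erase k, (t k - t l))
          = (t k - t j) * ∏ l ∈ (Finset.univ.erase k).erase j, (t k - t l) := by
        rw [← Finset.mul_prod_erase _ _ hjmem]
      rw [hAj, hAk, Finset.prod_mul_distrib, Finset.prod_inv_distrib]
      field_simp
    · intro i hi hij
      have hjmem : j ∈ (Finset.univ.erase k).erase i := by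
        refine Finset.mem_erase.mpr ⟨Ne.symm hij, Finset.mem_erase.mpr ⟨hjk, Finset.mem_univ j⟩⟩
      rw [Finset.prod_eq_zero hjmem, zero_mul]
      exact Lagrange.eval_basisDivisor_right
    · intro h
      exact absurd (Finset.mem_erase.mpr ⟨hjk, Finset.mem_univ j⟩) h

/-- The trailing `N × N` block of the Lagrange differentiation matrix is invertible. -/
theorem stmt_7 (N : ℕ) (hN : 1 ≤ N) (t : Fin (N + 1) → ℝ) (ht : StrictMono t) :
    IsUnit ((lagrangeD t).submatrix Fin.succ Fin.succ) := by
  classical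
  have hinj : Function.Injective t := ht.injective
  rw [← Matrix.mulVec_injective_iff_isUnit]
  have key : ∀ v : Fin N → ℝ,
      ((lagrangeD t).submatrix Fin.succ Fin.succ).mulVec v = 0 → v = 0 := by
    intro v hv
    set w : Fin (N + 1) → ℝ := Fin.cons 0 v with hw
    set p : Polynomial ℝ := Lagrange.interpolate Finset.univ t w with hp
    have hinjOn : Set.InjOn t (Finset.univ : Finset (Fin (N + 1))) := hinj.injOn
    -- derivative of p evaluated at the nodes
    have hder : ∀ j, (Polynomial.derivative p).eval (t j)
        = ∑ k, w k * lagrangeD t j k := by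
      intro j
      rw [hp, Lagrange.interpolate_apply, map_sum, Polynomial.eval_finset_sum]
      refine Finset.sum_congr rfl fun k _ => ?_
      rw [Polynomial.derivative_C_mul, Polynomial.eval_mul, Polynomial.eval_C,
        lagrangeD_eq_derivative_basis_eval t hinj]
    have hder0 : ∀ i : Fin N, (Polynomial.derivative p).eval (t (Fin.succ i)) = 0 := by
      intro i
      rw [hder]
      have := congrFun hv i
      simp only [Matrix.mulVec, Matrix.submatrix_apply, dotProduct, Pi.zero_apply] at this
      rw [Fin.sum_univ_succ]
      simp only [hw, Fin.cons_zero, Fin.cons_succ, mul_zero, zero_mul, zero_add]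
      exact (Finset.sum_congr rfl fun k _ => mul_comm _ _).trans this
    -- derivative p = 0
    have hcard : #((Finset.univ : Finset (Fin (N + 1))).erase 0) = N := by
      simp
    have hdp : Polynomial.derivative p = 0 := by
      by_cases hz : Polynomial.derivative p = 0
      · exact hz
      · refine Polynomial.eq_zero_of_degree_lt_of_eval_index_eq_zero
          ((Finset.univ : Finset (Fin (N + 1))).erase 0) (hinjOn.mono (by simp)) ?_ ?_
        · rw [hcard, ← Polynomial.natDegree_lt_iff_degree_lt hz]
          have hpz : p ≠ 0 := fun h => hz (by simp [h])
          have hnd : p.natDegree ≤ N := by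
            have := Lagrange.degree_interpolate_lt (r := w) hinjOn
            rw [Finset.card_univ, Fintype.card_fin,
              ← Polynomial.natDegree_lt_iff_degree_lt hpz] at this
            omega
          have hpnd : p.natDegree ≠ 0 := by
            intro h
            exact hz (by
              rw [Polynomial.eq_C_of_natDegree_eq_zero h]
              simp)
          have := Polynomial.natDegree_derivative_lt (p := p) hpnd
          omega
        · intro i hi
          obtain ⟨i', rfl⟩ := Fin.eq_succ_of_ne_zero (Finset.mem_erase.mp hi).1
          exact hder0 i'
    -- p is the zero constant
    have hpc : p = Polynomial.C (p.coeff 0) :=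
      Polynomial.eq_C_of_natDegree_eq_zero
        (Polynomial.natDegree_eq_zero_of_derivative_eq_zero hdp)
    have hp0 : p.eval (t 0) = 0 := by
      rw [hp, Lagrange.eval_interpolate_at_node w hinjOn (Finset.mem_univ 0)]
      simp [hw]
    have hpzero : p = 0 := by
      rw [hpc] at hp0 ⊢
      rw [Polynomial.eval_C] at hp0
      rw [hp0, Polynomial.C_0]
    funext i
    have := Lagrange.eval_interpolate_at_node w hinjOn (Finset.mem_univ (Fin.succ i))
    rw [← hp, hpzero] at this
    simpa [hw] using this.symm
  intro v₁ v₂ h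
  have := key (v₁ - v₂) (by rw [Matrix.mulVec_sub, h, sub_self])
  exact sub_eq_zero.mp this
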